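/- Let $\beta>0$, $M\ge 0$, and let $h:[0,\infty)\to[0,\infty)$ be $1$-periodic with $\int_0^1 h\le M$. Suppose nonnegative functions $E,D$ on $[0,\infty)$ satisfy $E(t)+\int_0^t e^{-\beta(t-s)}D(s)\,ds\le e^{-\beta t}E(0)+\int_0^t e^{-\beta(t-s)}h(s)\,ds$ for all $t$. Then $E(t)+\int_0^t e^{-\beta(t-s)}D(s)\,ds\le e^{-\beta t}E(0)+\frac{2e^{\beta}}{e^{\beta}-1}M$ for all $t\ge 0$. -/

import Mathlib

open MeasureTheory intervalIntegral

section Aux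

variable {h : ℝ → ℝ}

/-- Integrability of a function, 1-periodic on `[0,∞)`, on each `[n, n+1]`. -/
lemma periodic_intInt_unit (hper : ∀ s : ℝ, 0 ≤ s → h (s + 1) = h s)
    (hint : IntervalIntegrable h volume 0 1) :
    ∀ n : ℕ, IntervalIntegrable h volume n (n + 1) := by
  intro n
  induction n with
  | zero => simpa using hint
  | succ n IH =>
    have h1 : IntervalIntegrable (fun x => h (x + 1)) volume n (n + 1) := by
      refine IH.congr ?_
      intro x hx
      rw [Set.uIoc_of_le (by linarith : (n : ℝ) ≤ n + 1)] at hx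
      exact (hper x (le_trans (Nat.cast_nonneg n) hx.1.le)).symm
    have h2 := h1.comp_add_right (-1)
    simp only [sub_neg_eq_add] at h2
    have h3 : IntervalIntegrable h volume (n + 1) (n + 1 + 1) := by
      refine h2.congr ?_
      intro x _
      simp
    push_cast
    convert h3 using 2 <;> ring

lemma periodic_intInt (hper : ∀ s : ℝ, 0 ≤ s → h (s + 1) = h s)
    (hint : IntervalIntegrable h volume 0 1) :
    ∀ a b : ℝ, 0 ≤ a → 0 ≤ b → IntervalIntegrable h volume a b := by
  have key : ∀ n : ℕ, IntervalIntegrable h volume 0 n := by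
    intro n
    induction n with
    | zero => simp
    | succ n IH =>
      have := periodic_intInt_unit hper hint n
      push_cast
      exact IH.trans (by push_cast at this ⊢; exact this)
  intro a b ha hb
  set n : ℕ := ⌈max a b⌉₊ with hn
  have hcov : Set.uIcc a b ⊆ Set.uIcc (0 : ℝ) n := by
    apply Set.uIcc_subset_uIcc
    · rw [Set.uIcc_of_le (by positivity : (0:ℝ) ≤ n)]
      exact ⟨ha, le_trans (le_max_left a b) (Nat.le_ceil _)⟩
    · rw [Set.uIcc_of_le (by positivity : (0:ℝ) ≤ n)]
      exact ⟨hb, le_trans (le_max_right a b) (Nat.le_ceil _)⟩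
  exact (key n).mono_set hcov

/-- Shift the integral of a 1-periodic function by one period. -/
lemma periodic_shift (hper : ∀ s : ℝ, 0 ≤ s → h (s + 1) = h s)
    (a b : ℝ) (ha : 0 ≤ a) (hb : 0 ≤ b) :
    (∫ s in (a + 1)..(b + 1), h s) = ∫ s in a..b, h s := by
  rw [← intervalIntegral.integral_comp_add_right h 1]
  refine intervalIntegral.integral_congr fun x hx => ?_
  have hx0 : 0 ≤ x := by
    rcases Set.mem_uIcc.1 hx with ⟨h1, _⟩ | ⟨h1, _⟩ <;> linarith
  exact hper x hx0

/-- Integral over any unit interval `[a, a+1]` with `a ≥ 0` equals `∫₀¹ h`. -/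
lemma periodic_unit_integral (hper : ∀ s : ℝ, 0 ≤ s → h (s + 1) = h s)
    (hint : IntervalIntegrable h volume 0 1) :
    ∀ n : ℕ, ∀ a : ℝ, 0 ≤ a → a ≤ n → (∫ s in a..(a + 1), h s) = ∫ s in (0:ℝ)..1, h s := by
  have hII := periodic_intInt hper hint
  intro n
  induction n with
  | zero =>
    intro a ha han
    have : a = 0 := le_antisymm (by exact_mod_cast han) ha
    simp [this]
  | succ n IH =>
    intro a ha han
    rcases le_or_gt a 1 with h1 | h1
    · -- split at 1
      have e1 : (∫ s in a..(a+1), h s) = (∫ s in a..1, h s) + ∫ s in (1:ℝ)..(a+1), h s :=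
        (intervalIntegral.integral_add_adjacent_intervals
          (hII a 1 ha zero_le_one) (hII 1 (a+1) zero_le_one (by linarith))).symm
      have e2 : (∫ s in (1:ℝ)..(a+1), h s) = ∫ s in (0:ℝ)..a, h s := by
        have := periodic_shift hper 0 a le_rfl ha
        simpa using this
      rw [e1, e2, add_comm]
      exact intervalIntegral.integral_add_adjacent_intervals
        (hII 0 a le_rfl ha) (hII a 1 ha zero_le_one)
    · -- shift down by one
      have ha1 : 0 ≤ a - 1 := by linarith
      have := periodic_shift hper (a - 1) a ha1 ha
      simp only [sub_add_cancel] at this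
      rw [this]
      -- a = (a-1) + 1
      have := IH (a - 1) ha1 (by push_cast at han ⊢; linarith)
      simpa [sub_add_cancel] using this

end Aux

/-- Combination of the exponential Gronwall estimate with the periodic
integral lemma (Lemma 4.2): for 1-periodic forcing `h` with `∫₀¹ h ≤ M`,
the Duhamel bound yields a uniform-in-time estimate. -/
theorem gronwall_periodic_uniform_bound
    (β M : ℝ) (hβ : 0 < β) (hM : 0 ≤ M)
    (h : ℝ → ℝ)
    (hmeas : Measurable h)
    (hnonneg : ∀ s, 0 ≤ h s)
    (hper : ∀ s : ℝ, 0 ≤ s → h (s + 1) = h s)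
    (hint : IntervalIntegrable h volume 0 1)
    (hintM : ∫ s in (0:ℝ)..1, h s ≤ M)
    (E D : ℝ → ℝ)
    (hEnonneg : ∀ t, 0 ≤ t → 0 ≤ E t)
    (hDnonneg : ∀ t, 0 ≤ t → 0 ≤ D t)
    (hineq : ∀ t : ℝ, 0 ≤ t →
      E t + ∫ s in (0:ℝ)..t, Real.exp (-β * (t - s)) * D s
        ≤ Real.exp (-β * t) * E 0
          + ∫ s in (0:ℝ)..t, Real.exp (-β * (t - s)) * h s) :
    ∀ t : ℝ, 0 ≤ t →
      E t + ∫ s in (0:ℝ)..t, Real.exp (-β * (t - s)) * D s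
        ≤ Real.exp (-β * t) * E 0
          + (2 * Real.exp β / (Real.exp β - 1)) * M := by
  have hII := periodic_intInt hper hint
  set c : ℝ := Real.exp (-β) with hc
  have hc0 : 0 < c := Real.exp_pos _
  have hc1 : c < 1 := Real.exp_lt_one_iff.2 (by linarith)
  set B : ℝ := M / (1 - c) with hB
  have h1c : 0 < 1 - c := by linarith
  have hB0 : 0 ≤ B := div_nonneg hM h1c.le
  have hMB : M + c * B ≤ B := by
    have hBM : B * (1 - c) = M := by
      rw [hB]; field_simp
    nlinarith [hBM]
  -- integrability of the weighted integrand on [0, t] for t ≥ 0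
  have hWint : ∀ t a b : ℝ, 0 ≤ a → 0 ≤ b →
      IntervalIntegrable (fun s => Real.exp (-β * (t - s)) * h s) volume a b := by
    intro t a b ha hb
    exact (hII a b ha hb).continuousOn_mul
      (Continuous.continuousOn (by continuity))
  -- Key claim: uniform bound on the forcing integral
  have key : ∀ n : ℕ, ∀ t : ℝ, 0 ≤ t → t ≤ n →
      (∫ s in (0:ℝ)..t, Real.exp (-β * (t - s)) * h s) ≤ B := by
    intro n
    induction n with
    | zero =>
      intro t ht htn
      have : t = 0 := le_antisymm (by exact_mod_cast htn) ht
      simp [this, hB0]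
    | succ n IH =>
      intro t ht htn
      rcases le_or_gt t 1 with h1 | h1
      · -- t ≤ 1 : direct estimate
        have mono1 : (∫ s in (0:ℝ)..t, Real.exp (-β * (t - s)) * h s)
            ≤ ∫ s in (0:ℝ)..t, h s := by
          refine intervalIntegral.integral_mono_on ht (hWint t 0 t le_rfl ht)
            (hII 0 t le_rfl ht) fun x hx => ?_
          have hxt : x ≤ t := hx.2
          have : Real.exp (-β * (t - x)) ≤ 1 :=
            Real.exp_le_one_iff.2 (by nlinarith)
          nlinarith [hnonneg x]
        have mono2 : (∫ s in (0:ℝ)..t, h s) ≤ ∫ s in (0:ℝ)..1, h s := by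
          have split : (∫ s in (0:ℝ)..1, h s)
              = (∫ s in (0:ℝ)..t, h s) + ∫ s in t..1, h s :=
            (intervalIntegral.integral_add_adjacent_intervals
              (hII 0 t le_rfl ht) (hII t 1 ht zero_le_one)).symm
          have pos : 0 ≤ ∫ s in t..1, h s :=
            intervalIntegral.integral_nonneg h1 fun u _ => hnonneg u
          linarith
        have hMleB : M ≤ B := by nlinarith [hMB, mul_nonneg hc0.le hB0]
        linarith
      · -- 1 < t : split at t - 1 and use the induction hypothesis
        have ht1 : 0 ≤ t - 1 := by linarith
        have split : (∫ s in (0:ℝ)..t, Real.exp (-β * (t - s)) * h s)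
            = (∫ s in (0:ℝ)..(t-1), Real.exp (-β * (t - s)) * h s)
              + ∫ s in (t-1)..t, Real.exp (-β * (t - s)) * h s :=
          (intervalIntegral.integral_add_adjacent_intervals
            (hWint t 0 (t-1) le_rfl ht1) (hWint t (t-1) t ht1 ht)).symm
        -- tail piece: ≤ ∫ over one period ≤ M
        have tail : (∫ s in (t-1)..t, Real.exp (-β * (t - s)) * h s) ≤ M := by
          have mono1 : (∫ s in (t-1)..t, Real.exp (-β * (t - s)) * h s)
              ≤ ∫ s in (t-1)..t, h s := by
            refine intervalIntegral.integral_mono_on (by linarith)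
              (hWint t (t-1) t ht1 ht) (hII (t-1) t ht1 ht) fun x hx => ?_
            have : Real.exp (-β * (t - x)) ≤ 1 :=
              Real.exp_le_one_iff.2 (by nlinarith [hx.2])
            nlinarith [hnonneg x]
          have per : (∫ s in (t-1)..t, h s) = ∫ s in (0:ℝ)..1, h s := by
            have := periodic_unit_integral hper hint (n+1) (t-1) ht1
              (by push_cast at htn ⊢; linarith)
            simpa [sub_add_cancel] using this
          linarith
        -- head piece: factor out exp(-β)
        have head : (∫ s in (0:ℝ)..(t-1), Real.exp (-β * (t - s)) * h s)
            = c * ∫ s in (0:ℝ)..(t-1), Real.exp (-β * (t - 1 - s)) * h s := by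
          rw [← intervalIntegral.integral_const_mul]
          refine intervalIntegral.integral_congr fun x _ => ?_
          rw [hc, ← mul_assoc, ← Real.exp_add]
          ring_nf
        have IH' : (∫ s in (0:ℝ)..(t-1), Real.exp (-β * (t - 1 - s)) * h s) ≤ B :=
          IH (t-1) ht1 (by push_cast at htn; linarith)
        have headle : (∫ s in (0:ℝ)..(t-1), Real.exp (-β * (t - s)) * h s) ≤ c * B := by
          rw [head]; exact mul_le_mul_of_nonneg_left IH' hc0.le
        linarith
    -- end induction
  intro t ht
  have hkey : (∫ s in (0:ℝ)..t, Real.exp (-β * (t - s)) * h s) ≤ B :=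
    key ⌈t⌉₊ t ht (Nat.le_ceil t)
  have hmain := hineq t ht
  -- B ≤ 2 e^β/(e^β-1) M
  have hexp1 : 1 < Real.exp β := by nlinarith [Real.add_one_le_exp β]
  have hpos : 0 < Real.exp β - 1 := by linarith
  have hBle : B ≤ 2 * Real.exp β / (Real.exp β - 1) * M := by
    have h1 : 1 - c = (Real.exp β - 1) / Real.exp β := by
      rw [hc, Real.exp_neg]
      field_simp
    have hEq : B = Real.exp β / (Real.exp β - 1) * M := by
      rw [hB, h1]
      field_simp
    rw [hEq]
    have hle : Real.exp β / (Real.exp β - 1) ≤ 2 * Real.exp β / (Real.exp β - 1) := by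
      gcongr
      linarith [Real.exp_pos β]
    exact mul_le_mul_of_nonneg_right hle hM
  linarith
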